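/- In a quasi Gelfand triple (H₊, H₀, H₋), the set D₊ ∩ D₋ is dense in H₊ and dense in H₋ with respect to their respective norms. -/

import Mathlib

open Filter Topology
open scoped ComplexInnerProductSpace

noncomputable section

/-- A quasi Gelfand triple `(H₊, H₀, H₋)`, encoded by the two embeddings
`ι₊ : D₊ ⊆ H₊ → H₀` and `ι₋ : D₋ ⊆ H₋ → H₀`: both are injective, closed, densely defined
with dense ranges, and the `H₋`-norm of an element of `D₋` equals the `H₊`-norm of its image
under the adjoint `ι₊*` (which exactly says that `H₋` completes `D₋` under
`‖g‖₋ = sup_{f ∈ D₊} |⟨g, f⟩₀|/‖f‖₊`); moreover `ran ι₋` is all of `dom ι₊*`. -/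
structure QuasiGelfandTriple (Hp H₀ Hm : Type*)
    [NormedAddCommGroup Hp] [InnerProductSpace ℂ Hp] [CompleteSpace Hp]
    [NormedAddCommGroup H₀] [InnerProductSpace ℂ H₀] [CompleteSpace H₀]
    [NormedAddCommGroup Hm] [InnerProductSpace ℂ Hm] [CompleteSpace Hm] where
  ip : Hp →ₗ.[ℂ] H₀
  im : Hm →ₗ.[ℂ] H₀
  ip_dense_dom : Dense (ip.domain : Set Hp)
  im_dense_dom : Dense (im.domain : Set Hm)
  ip_closed : IsClosed {p : Hp × H₀ | ∃ f : ip.domain, (f : Hp) = p.1 ∧ ip f = p.2}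
  im_closed : IsClosed {p : Hm × H₀ | ∃ g : im.domain, (g : Hm) = p.1 ∧ im g = p.2}
  ip_injective : ∀ f : ip.domain, ip f = 0 → (f : Hp) = 0
  im_injective : ∀ g : im.domain, im g = 0 → (g : Hm) = 0
  ip_dense_ran : Dense (Set.range fun f : ip.domain => ip f)
  im_dense_ran : Dense (Set.range fun g : im.domain => im g)
  riesz : ∀ g : im.domain, ∃ v : Hp,
    (∀ f : ip.domain, ⟪im g, ip f⟫ = ⟪v, (f : Hp)⟫) ∧ ‖v‖ = ‖(g : Hm)‖
  ran_im : ∀ (u : H₀) (v : Hp),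
    (∀ f : ip.domain, ⟪u, ip f⟫ = ⟪v, (f : Hp)⟫) → ∃ g : im.domain, im g = u


section Aux
open scoped ComplexInnerProductSpace
variable {Hp H₀ Hm : Type*}
    [NormedAddCommGroup Hp] [InnerProductSpace ℂ Hp] [CompleteSpace Hp]
    [NormedAddCommGroup H₀] [InnerProductSpace ℂ H₀] [CompleteSpace H₀]
    [NormedAddCommGroup Hm] [InnerProductSpace ℂ Hm] [CompleteSpace Hm]
    (Q : QuasiGelfandTriple Hp H₀ Hm)

namespace QGT14

/-- The raw map `A = ι₊* ∘ ι₋ : D₋ → H₊`. -/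
def A0 (g : Q.im.domain) : Hp := (Q.riesz g).choose

lemma A0_spec (g : Q.im.domain) (f : Q.ip.domain) :
    ⟪Q.im g, Q.ip f⟫ = ⟪A0 Q g, (f : Hp)⟫ := (Q.riesz g).choose_spec.1 f

lemma A0_norm (g : Q.im.domain) : ‖A0 Q g‖ = ‖(g : Hm)‖ := (Q.riesz g).choose_spec.2

/-- `A` as a linear isometry. -/
def Ali : Q.im.domain →ₗᵢ[ℂ] Hp where
  toLinearMap :=
  { toFun := A0 Q
    map_add' := fun g h => Q.ip_dense_dom.eq_of_inner_left ℂ fun f hf => by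
      lift f to Q.ip.domain using hf
      rw [← A0_spec, inner_add_left, ← A0_spec, ← A0_spec, ← inner_add_left, ← Q.im.map_add]
    map_smul' := fun c g => Q.ip_dense_dom.eq_of_inner_left ℂ fun f hf => by
      lift f to Q.ip.domain using hf
      rw [← A0_spec, RingHom.id_apply, inner_smul_left, ← A0_spec, ← inner_smul_left,
        ← Q.im.map_smul] }
  norm_map' := fun g => by simpa using A0_norm Q g

lemma Ali_apply (g : Q.im.domain) : Ali Q g = A0 Q g := rfl

lemma A0_inner (g h : Q.im.domain) : ⟪A0 Q g, A0 Q h⟫ = ⟪(g : Hm), (h : Hm)⟫ :=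
  (Ali Q).inner_map_map g h

/-- The continuous extension `Ā : H₋ → H₊`. -/
def Abar : Hm →L[ℂ] Hp :=
  ((Ali Q).toContinuousLinearMap).extend (Submodule.subtypeL Q.im.domain)

lemma Abar_eq (g : Q.im.domain) : Abar Q (g : Hm) = A0 Q g :=
  ContinuousLinearMap.extend_eq _ Q.im_dense_dom.denseRange_val
    isUniformEmbedding_subtype_val.isUniformInducing g

lemma Abar_inner (g : Q.im.domain) (w : Hm) : ⟪A0 Q g, Abar Q w⟫ = ⟪(g : Hm), w⟫ := by
  have : (fun w : Hm => ⟪A0 Q g, Abar Q w⟫) = fun w => ⟪(g : Hm), w⟫ := by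
    refine Continuous.ext_on Q.im_dense_dom ?_ ?_ ?_
    · exact continuous_const.inner (Abar Q).continuous
    · exact continuous_const.inner continuous_id
    · intro x hx
      lift x to Q.im.domain using hx
      show ⟪A0 Q g, Abar Q (x : Hm)⟫ = ⟪(g : Hm), (x : Hm)⟫
      rw [Abar_eq, A0_inner]
  exact congr_fun this w

/-- The graph of `ι₊` inside the Hilbert space `WithLp 2 (H₊ × H₀)`. -/
def Kp : Submodule ℂ (WithLp 2 (Hp × H₀)) :=
  Q.ip.graph.comap (WithLp.linearEquiv 2 ℂ (Hp × H₀)).toLinearMap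

lemma mem_Kp {v : WithLp 2 (Hp × H₀)} :
    v ∈ Kp Q ↔ ∃ f : Q.ip.domain, (f : Hp) = v.fst ∧ Q.ip f = v.snd := by
  simp [Kp, Submodule.mem_comap]

lemma Kp_closed : IsClosed (Kp Q : Set (WithLp 2 (Hp × H₀))) := by
  have : (Kp Q : Set (WithLp 2 (Hp × H₀))) =
      (WithLp.prodContinuousLinearEquiv 2 ℂ Hp H₀) ⁻¹'
        {p : Hp × H₀ | ∃ f : Q.ip.domain, (f : Hp) = p.1 ∧ Q.ip f = p.2} := by
    ext v
    exact mem_Kp Q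
  rw [this]
  exact Q.ip_closed.preimage (WithLp.prodContinuousLinearEquiv 2 ℂ Hp H₀).continuous

/-- The graph of `ι₋` inside the Hilbert space `WithLp 2 (H₋ × H₀)`. -/
def Km : Submodule ℂ (WithLp 2 (Hm × H₀)) :=
  Q.im.graph.comap (WithLp.linearEquiv 2 ℂ (Hm × H₀)).toLinearMap

lemma mem_Km {v : WithLp 2 (Hm × H₀)} :
    v ∈ Km Q ↔ ∃ g : Q.im.domain, (g : Hm) = v.fst ∧ Q.im g = v.snd := by
  simp [Km, Submodule.mem_comap]

lemma Km_closed : IsClosed (Km Q : Set (WithLp 2 (Hm × H₀))) := by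
  have : (Km Q : Set (WithLp 2 (Hm × H₀))) =
      (WithLp.prodContinuousLinearEquiv 2 ℂ Hm H₀) ⁻¹'
        {p : Hm × H₀ | ∃ g : Q.im.domain, (g : Hm) = p.1 ∧ Q.im g = p.2} := by
    ext v
    exact mem_Km Q
  rw [this]
  exact Q.im_closed.preimage (WithLp.prodContinuousLinearEquiv 2 ℂ Hm H₀).continuous
lemma mem_Kp_orth {z : WithLp 2 (Hp × H₀)} (hz : z ∈ (Kp Q)ᗮ) (f : Q.ip.domain) :
    ⟪(f : Hp), z.fst⟫ + ⟪Q.ip f, z.snd⟫ = 0 := by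
  have hm : (WithLp.equiv 2 (Hp × H₀)).symm ((f : Hp), Q.ip f) ∈ Kp Q :=
    (mem_Kp Q).mpr ⟨f, rfl, rfl⟩
  have := (Submodule.mem_orthogonal _ _).mp hz _ hm
  rwa [WithLp.prod_inner_apply] at this

lemma mem_Km_orth {z : WithLp 2 (Hm × H₀)} (hz : z ∈ (Km Q)ᗮ) (g : Q.im.domain) :
    ⟪(g : Hm), z.fst⟫ + ⟪Q.im g, z.snd⟫ = 0 := by
  have hm : (WithLp.equiv 2 (Hm × H₀)).symm ((g : Hm), Q.im g) ∈ Km Q :=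
    (mem_Km Q).mpr ⟨g, rfl, rfl⟩
  have := (Submodule.mem_orthogonal _ _).mp hz _ hm
  rwa [WithLp.prod_inner_apply] at this

/-- Structure of elements of `G(ι₊)ᗮ`: they are of the form `(-ι₊*(ι₋ g), ι₋ g)`. -/
lemma Kp_orth_repr {z : WithLp 2 (Hp × H₀)} (hz : z ∈ (Kp Q)ᗮ) :
    ∃ g : Q.im.domain, Q.im g = z.snd ∧ A0 Q g = -z.fst := by
  have h1 : ∀ f : Q.ip.domain, ⟪z.snd, Q.ip f⟫ = ⟪-z.fst, (f : Hp)⟫ := by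
    intro f
    have h2 := congrArg (starRingEnd ℂ) (mem_Kp_orth Q hz f)
    simp only [map_add, inner_conj_symm, map_zero] at h2
    rw [inner_neg_left]
    linear_combination h2
  obtain ⟨g, hg⟩ := Q.ran_im z.snd (-z.fst) h1
  refine ⟨g, hg, Q.ip_dense_dom.eq_of_inner_left ℂ fun f hf => ?_⟩
  lift f to Q.ip.domain using hf
  rw [← A0_spec, hg]
  exact h1 f

/-- `dom ι₋* ⊆ ran ι₊`, the key nontrivial step for density in `H₋`. -/
lemma ran_ip (u : H₀) (w : Hm) (h : ∀ g : Q.im.domain, ⟪u, Q.im g⟫ = ⟪w, (g : Hm)⟫) :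
    ∃ f : Q.ip.domain, Q.ip f = u := by
  have hmem : (WithLp.equiv 2 (Hp × H₀)).symm (Abar Q w, u) ∈ (Kp Q)ᗮᗮ := by
    rw [Submodule.mem_orthogonal]
    intro z hz
    obtain ⟨g, hg1, hg2⟩ := Kp_orth_repr Q hz
    simp only [WithLp.prod_inner_apply, WithLp.equiv_symm_apply, WithLp.ofLp_toLp, WithLp.ofLp_fst,
      WithLp.ofLp_snd]
    have hzf : -(A0 Q g) = z.fst := by rw [hg2, neg_neg]
    have e1 : ⟪z.fst, Abar Q w⟫ = -⟪(g : Hm), w⟫ := by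
      rw [← hzf, inner_neg_left, Abar_inner]
    have e2 : ⟪z.snd, u⟫ = ⟪(g : Hm), w⟫ := by
      rw [← hg1]
      have h2 := congrArg (starRingEnd ℂ) (h g)
      simpa only [inner_conj_symm] using h2
    rw [e1, e2]
    ring
  rw [(Kp Q).orthogonal_orthogonal_eq_closure,
    (Kp_closed Q).submodule_topologicalClosure_eq] at hmem
  obtain ⟨f, _, hf2⟩ := (mem_Kp Q).mp hmem
  exact ⟨f, by simpa using hf2⟩
/-- Density of `D₊ ∩ D₋` in `H₊`. -/
lemma dense_p :
    Dense {x : Hp | ∃ f : Q.ip.domain, (f : Hp) = x ∧ ∃ g : Q.im.domain, Q.im g = Q.ip f} := by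
  let Sp : Submodule ℂ Hp :=
  { carrier := {x | ∃ f : Q.ip.domain, (f : Hp) = x ∧ ∃ g : Q.im.domain, Q.im g = Q.ip f}
    zero_mem' := ⟨0, ZeroMemClass.coe_zero _, 0, by simp [LinearPMap.map_zero]⟩
    add_mem' := by
      rintro a b ⟨f₁, rfl, g₁, hg₁⟩ ⟨f₂, rfl, g₂, hg₂⟩
      exact ⟨f₁ + f₂, rfl, g₁ + g₂, by rw [Q.im.map_add, Q.ip.map_add, hg₁, hg₂]⟩
    smul_mem' := by
      rintro c a ⟨f, rfl, g, hg⟩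
      exact ⟨c • f, rfl, c • g, by rw [Q.im.map_smul, Q.ip.map_smul, hg]⟩ }
  show Dense (Sp : Set Hp)
  rw [Submodule.dense_iff_topologicalClosure_eq_top, Submodule.topologicalClosure_eq_top_iff,
    Submodule.eq_bot_iff]
  intro x hx
  haveI : CompleteSpace (Kp Q) := (Kp_closed Q).completeSpace_coe
  obtain ⟨y, hy, z, hz, hv⟩ :=
    (Kp Q).exists_add_mem_mem_orthogonal ((WithLp.equiv 2 (Hp × H₀)).symm (x, 0))
  obtain ⟨f, hf1, hf2⟩ := (mem_Kp Q).mp hy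
  -- components of `z`
  have hz1 : z.fst = x - (f : Hp) := by
    have h1 := congrArg Prod.fst (congrArg (WithLp.equiv 2 (Hp × H₀)) hv)
    simp only [Equiv.apply_symm_apply, WithLp.equiv_apply, WithLp.ofLp_fst, WithLp.add_fst] at h1
    rw [h1, ← hf1]; abel
  have hz2 : z.snd = -(Q.ip f) := by
    have h1 := congrArg Prod.snd (congrArg (WithLp.equiv 2 (Hp × H₀)) hv)
    rw [show ((WithLp.equiv 2 (Hp × H₀)) ((WithLp.equiv 2 (Hp × H₀)).symm (x, 0))).snd = (0 : H₀)
      from rfl] at h1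
    rw [show ((WithLp.equiv 2 (Hp × H₀)) (y + z)).snd = y.snd + z.snd from rfl] at h1
    rw [show y.snd = Q.ip f from hf2.symm] at h1
    rw [eq_comm, add_eq_zero_iff_eq_neg] at h1
    rw [h1, neg_neg]
  -- the key relation  ⟪ι₊ f', ι₊ f⟫ = ⟪f', x - f⟫  for all f'
  have key : ∀ f' : Q.ip.domain, ⟪(f' : Hp), x - (f : Hp)⟫ = ⟪Q.ip f', Q.ip f⟫ := by
    intro f'
    have h1 := mem_Kp_orth Q hz f'
    rw [hz1, hz2, inner_neg_right] at h1
    linear_combination h1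
  -- `f` lies in `Sp`
  have hfSp : (f : Hp) ∈ Sp := by
    have h1 : ∀ f' : Q.ip.domain, ⟪Q.ip f, Q.ip f'⟫ = ⟪x - (f : Hp), (f' : Hp)⟫ := by
      intro f'
      have h2 := congrArg (starRingEnd ℂ) (key f')
      simpa only [inner_conj_symm] using h2.symm
    obtain ⟨g, hg⟩ := Q.ran_im (Q.ip f) (x - (f : Hp)) h1
    exact ⟨f, rfl, g, hg⟩
  -- conclude `f = 0`
  have hx_f : ⟪(f : Hp), x⟫ = 0 := by
    have := (Submodule.mem_orthogonal _ _).mp hx _ hfSp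
    exact this
  have hzero : ⟪Q.ip f, Q.ip f⟫ + ⟪(f : Hp), (f : Hp)⟫ = 0 := by
    have h1 := key f
    rw [inner_sub_right, hx_f] at h1
    linear_combination -h1
  have hf0 : (f : Hp) = 0 ∧ Q.ip f = 0 := by
    rw [inner_self_eq_norm_sq_to_K, inner_self_eq_norm_sq_to_K] at hzero
    have hre : ‖Q.ip f‖ ^ 2 + ‖(f : Hp)‖ ^ 2 = 0 := RCLike.ofReal_eq_zero.mp (by push_cast; exact hzero)
    have h2 : ‖(f : Hp)‖ = 0 ∧ ‖Q.ip f‖ = 0 := by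
      constructor <;> nlinarith [norm_nonneg (Q.ip f), norm_nonneg ((f : Hp))]
    exact ⟨norm_eq_zero.mp h2.1, norm_eq_zero.mp h2.2⟩
  -- hence ⟪f', x⟫ = 0 for all f' in the dense domain
  refine Q.ip_dense_dom.eq_zero_of_inner_right ℂ fun f' hf' => ?_
  lift f' to Q.ip.domain using hf'
  have h1 := key f'
  rw [hf0.1, hf0.2, sub_zero, inner_zero_right] at h1
  exact h1

/-- Density of `D₊ ∩ D₋` in `H₋`. -/
lemma dense_m :
    Dense {y : Hm | ∃ g : Q.im.domain, (g : Hm) = y ∧ ∃ f : Q.ip.domain, Q.ip f = Q.im g} := by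
  let Sm : Submodule ℂ Hm :=
  { carrier := {y | ∃ g : Q.im.domain, (g : Hm) = y ∧ ∃ f : Q.ip.domain, Q.ip f = Q.im g}
    zero_mem' := ⟨0, ZeroMemClass.coe_zero _, 0, by simp [LinearPMap.map_zero]⟩
    add_mem' := by
      rintro a b ⟨g₁, rfl, f₁, hf₁⟩ ⟨g₂, rfl, f₂, hf₂⟩
      exact ⟨g₁ + g₂, rfl, f₁ + f₂, by rw [Q.im.map_add, Q.ip.map_add, hf₁, hf₂]⟩
    smul_mem' := by
      rintro c a ⟨g, rfl, f, hf⟩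
      exact ⟨c • g, rfl, c • f, by rw [Q.im.map_smul, Q.ip.map_smul, hf]⟩ }
  show Dense (Sm : Set Hm)
  rw [Submodule.dense_iff_topologicalClosure_eq_top, Submodule.topologicalClosure_eq_top_iff,
    Submodule.eq_bot_iff]
  intro y hy
  haveI : CompleteSpace (Km Q) := (Km_closed Q).completeSpace_coe
  obtain ⟨u, hu, z, hz, hv⟩ :=
    (Km Q).exists_add_mem_mem_orthogonal ((WithLp.equiv 2 (Hm × H₀)).symm (y, 0))
  obtain ⟨g, hg1, hg2⟩ := (mem_Km Q).mp hu
  have hz1 : z.fst = y - (g : Hm) := by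
    have h1 := congrArg Prod.fst (congrArg (WithLp.equiv 2 (Hm × H₀)) hv)
    simp only [Equiv.apply_symm_apply, WithLp.equiv_apply, WithLp.ofLp_fst, WithLp.add_fst] at h1
    rw [h1, ← hg1]; abel
  have hz2 : z.snd = -(Q.im g) := by
    have h1 := congrArg Prod.snd (congrArg (WithLp.equiv 2 (Hm × H₀)) hv)
    rw [show ((WithLp.equiv 2 (Hm × H₀)) ((WithLp.equiv 2 (Hm × H₀)).symm (y, 0))).snd = (0 : H₀)
      from rfl] at h1
    rw [show ((WithLp.equiv 2 (Hm × H₀)) (u + z)).snd = u.snd + z.snd from rfl] at h1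
    rw [show u.snd = Q.im g from hg2.symm] at h1
    rw [eq_comm, add_eq_zero_iff_eq_neg] at h1
    rw [h1, neg_neg]
  have key : ∀ g' : Q.im.domain, ⟪(g' : Hm), y - (g : Hm)⟫ = ⟪Q.im g', Q.im g⟫ := by
    intro g'
    have h1 := mem_Km_orth Q hz g'
    rw [hz1, hz2, inner_neg_right] at h1
    linear_combination h1
  have hgSm : (g : Hm) ∈ Sm := by
    have h1 : ∀ g' : Q.im.domain, ⟪Q.im g, Q.im g'⟫ = ⟪y - (g : Hm), (g' : Hm)⟫ := by
      intro g'
      have h2 := congrArg (starRingEnd ℂ) (key g')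
      simpa only [inner_conj_symm] using h2.symm
    obtain ⟨f, hf⟩ := ran_ip Q (Q.im g) (y - (g : Hm)) h1
    exact ⟨g, rfl, f, hf⟩
  have hy_g : ⟪(g : Hm), y⟫ = 0 := (Submodule.mem_orthogonal _ _).mp hy _ hgSm
  have hzero : ⟪Q.im g, Q.im g⟫ + ⟪(g : Hm), (g : Hm)⟫ = 0 := by
    have h1 := key g
    rw [inner_sub_right, hy_g] at h1
    linear_combination -h1
  have hg0 : (g : Hm) = 0 ∧ Q.im g = 0 := by
    rw [inner_self_eq_norm_sq_to_K, inner_self_eq_norm_sq_to_K] at hzero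
    have hre : ‖Q.im g‖ ^ 2 + ‖(g : Hm)‖ ^ 2 = 0 :=
      RCLike.ofReal_eq_zero.mp (by push_cast; exact hzero)
    have h2 : ‖(g : Hm)‖ = 0 ∧ ‖Q.im g‖ = 0 := by
      constructor <;> nlinarith [norm_nonneg (Q.im g), norm_nonneg ((g : Hm))]
    exact ⟨norm_eq_zero.mp h2.1, norm_eq_zero.mp h2.2⟩
  refine Q.im_dense_dom.eq_zero_of_inner_right ℂ fun g' hg' => ?_
  lift g' to Q.im.domain using hg'
  have h1 := key g'
  rw [hg0.1, hg0.2, sub_zero, inner_zero_right] at h1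
  exact h1

end QGT14
end Aux

/-- In a quasi Gelfand triple `(H₊, H₀, H₋)`, the set `D₊ ∩ D₋` is
dense in `H₊` and dense in `H₋` with respect to their respective norms. -/
theorem stmt14 {Hp H₀ Hm : Type*}
    [NormedAddCommGroup Hp] [InnerProductSpace ℂ Hp] [CompleteSpace Hp]
    [NormedAddCommGroup H₀] [InnerProductSpace ℂ H₀] [CompleteSpace H₀]
    [NormedAddCommGroup Hm] [InnerProductSpace ℂ Hm] [CompleteSpace Hm]
    (Q : QuasiGelfandTriple Hp H₀ Hm) :
    Dense {x : Hp | ∃ f : Q.ip.domain, (f : Hp) = x ∧ ∃ g : Q.im.domain, Q.im g = Q.ip f} ∧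
    Dense {y : Hm | ∃ g : Q.im.domain, (g : Hm) = y ∧ ∃ f : Q.ip.domain, Q.ip f = Q.im g} :=
  ⟨QGT14.dense_p Q, QGT14.dense_m Q⟩
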